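/- A subset V of a topological space X is U-representable (i.e., V = ⋃_n U_n with U_n ⊆ U_{n+1}, U_{2n-1} a zero-set and U_{2n} a cozero-set for all n ≥ 1) if and only if V is a cozero-set of X. -/

import Mathlib

def IsZeroSet {X : Type*} [TopologicalSpace X] (S : Set X) : Prop :=
  ∃ f : X → ℝ, Continuous f ∧ (∀ x, f x ∈ Set.Icc (0:ℝ) 1) ∧ S = f ⁻¹' {0}

def IsCozeroSet {X : Type*} [TopologicalSpace X] (S : Set X) : Prop :=
  ∃ f : X → ℝ, Continuous f ∧ (∀ x, f x ∈ Set.Icc (0:ℝ) 1) ∧ S = {x | f x ≠ 0}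

lemma isZeroSet_ge {X : Type*} [TopologicalSpace X] (f : X → ℝ) (hc : Continuous f)
    (hb : ∀ x, f x ∈ Set.Icc (0:ℝ) 1) (c : ℝ) (hc0 : 0 ≤ c) (hc1 : c ≤ 1) :
    IsZeroSet {x | c ≤ f x} := by
  refine ⟨fun x => max (c - f x) 0, by continuity, fun x => ⟨le_max_right _ _, ?_⟩, ?_⟩
  · exact max_le (by linarith [(hb x).1, (hb x).2]) zero_le_one
  · ext x
    simp only [Set.mem_setOf_eq, Set.mem_preimage, Set.mem_singleton_iff]
    rw [max_eq_right_iff]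
    constructor <;> intro h <;> linarith

lemma isCozeroSet_gt {X : Type*} [TopologicalSpace X] (f : X → ℝ) (hc : Continuous f)
    (hb : ∀ x, f x ∈ Set.Icc (0:ℝ) 1) (c : ℝ) (hc0 : 0 ≤ c) :
    IsCozeroSet {x | c < f x} := by
  refine ⟨fun x => max (f x - c) 0, by continuity, fun x => ⟨le_max_right _ _, ?_⟩, ?_⟩
  · exact max_le (by linarith [(hb x).1, (hb x).2]) zero_le_one
  · ext x
    simp only [Set.mem_setOf_eq, ne_eq]
    rw [← not_iff_not, not_not, not_lt, max_eq_right_iff]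
    constructor <;> intro h <;> linarith

lemma isCozeroSet_iUnion {X : Type*} [TopologicalSpace X] (S : ℕ → Set X)
    (h : ∀ n, IsCozeroSet (S n)) : IsCozeroSet (⋃ n, S n) := by
  choose f hc hb hS using h
  have hsum0 : Summable fun n : ℕ => ((1:ℝ)/2) ^ (n+1) := by
    have := (summable_geometric_of_lt_one (by norm_num : (0:ℝ) ≤ 1/2) (by norm_num)).mul_left (1/2)
    simpa [pow_succ, mul_comm] using this
  have hterm : ∀ (x : X) (n : ℕ), 0 ≤ ((1:ℝ)/2) ^ (n+1) * f n x := by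
    intro x n
    exact mul_nonneg (by positivity) (hb n x).1
  have htle : ∀ (x : X) (n : ℕ), ((1:ℝ)/2) ^ (n+1) * f n x ≤ ((1:ℝ)/2) ^ (n+1) := by
    intro x n
    nth_rewrite 2 [← mul_one (((1:ℝ)/2) ^ (n+1))]
    exact mul_le_mul_of_nonneg_left (hb n x).2 (by positivity)
  have hsum : ∀ x : X, Summable fun n => ((1:ℝ)/2) ^ (n+1) * f n x := by
    intro x
    exact Summable.of_nonneg_of_le (hterm x) (htle x) hsum0
  refine ⟨fun x => ∑' n, ((1:ℝ)/2) ^ (n+1) * f n x, ?_, ?_, ?_⟩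
  · apply continuous_tsum (fun n => ((continuous_const.mul (hc n)))) hsum0
    intro n x
    rw [Real.norm_eq_abs, Pi.mul_apply, abs_of_nonneg (hterm x n)]
    exact htle x n
  · intro x
    constructor
    · exact tsum_nonneg (hterm x)
    · calc ∑' n, ((1:ℝ)/2) ^ (n+1) * f n x ≤ ∑' n : ℕ, ((1:ℝ)/2) ^ (n+1) :=
            Summable.tsum_le_tsum (htle x) (hsum x) hsum0
        _ = 1 := by
            have : ∑' n : ℕ, ((1:ℝ)/2) ^ (n+1) = (1/2) * ∑' n : ℕ, ((1:ℝ)/2) ^ n := by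
              rw [← tsum_mul_left]
              exact tsum_congr fun n => by ring
            rw [this, tsum_geometric_of_lt_one (by norm_num) (by norm_num)]
            norm_num
  · ext x
    simp only [Set.mem_iUnion, Set.mem_setOf_eq, ne_eq]
    constructor
    · rintro ⟨n, hn⟩
      have hfn : f n x ≠ 0 := by
        have := hS n ▸ hn
        simpa using this
      have hfn' : 0 < f n x := lt_of_le_of_ne (hb n x).1 (Ne.symm hfn)
      have hpos : 0 < ((1:ℝ)/2) ^ (n+1) * f n x := mul_pos (by positivity) hfn'
      have hle := Summable.le_tsum (hsum x) n (fun m _ => hterm x m)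
      exact ne_of_gt (lt_of_lt_of_le hpos hle)
    · intro hne
      by_contra hall
      push_neg at hall
      have hz : ∀ n, f n x = 0 := by
        intro n
        have := hall n
        rw [hS n] at this
        simpa using this
      apply hne
      have : (fun n : ℕ => ((1:ℝ)/2) ^ (n+1) * f n x) = fun _ => 0 := by
        funext n; rw [hz n, mul_zero]
      rw [this, tsum_zero]

theorem urepresentable_iff_cozero {X : Type*} [TopologicalSpace X] (V : Set X) :
    (∃ U : ℕ → Set X, V = (⋃ n : ℕ, U (n + 1)) ∧ (∀ n, 1 ≤ n → U n ⊆ U (n + 1)) ∧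
      (∀ n, 1 ≤ n → IsZeroSet (U (2 * n - 1))) ∧ (∀ n, 1 ≤ n → IsCozeroSet (U (2 * n)))) ↔
    IsCozeroSet V := by
  constructor
  · rintro ⟨U, hV, hmono, hz, hcz⟩
    have hchain : ∀ a b : ℕ, 1 ≤ a → a ≤ b → U a ⊆ U b := by
      intro a b ha hab
      induction b, hab using Nat.le_induction with
      | base => exact subset_rfl
      | succ m hm ih => exact ih.trans (hmono m (le_trans ha hm))
    have hVe : V = ⋃ n, U (2 * n + 2) := by
      rw [hV]
      apply Set.Subset.antisymm
      · intro x hx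
        simp only [Set.mem_iUnion] at hx ⊢
        obtain ⟨n, hn⟩ := hx
        exact ⟨n, hchain (n+1) (2*n+2) (by omega) (by omega) hn⟩
      · intro x hx
        simp only [Set.mem_iUnion] at hx ⊢
        obtain ⟨n, hn⟩ := hx
        exact ⟨2*n+1, hn⟩
    rw [hVe]
    apply isCozeroSet_iUnion
    intro n
    have := hcz (n+1) (by omega)
    have he : 2 * (n+1) = 2*n+2 := by ring
    rwa [he] at this
  · rintro ⟨f, hc, hb, hV⟩
    set A : ℕ → Set X := fun k => {x | (1:ℝ)/(k+1) < f x} with hA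
    set B : ℕ → Set X := fun k => {x | (1:ℝ)/(k+1) ≤ f x} with hB
    set Ufun : ℕ → Set X := fun n => if Even n then A (n/2) else B (n/2) with hUfun
    have hd1 : ∀ k : ℕ, 2*k/2 = k := fun k => by omega
    have hd2 : ∀ k : ℕ, (2*k+1)/2 = k := fun k => by omega
    have hU2k : ∀ k, Ufun (2*k) = A k := by
      intro k
      show (if Even (2*k) then A (2*k/2) else B (2*k/2)) = A k
      rw [if_pos (even_two_mul k), hd1]
    have hU2k1 : ∀ k, Ufun (2*k+1) = B k := by
      intro k
      show (if Even (2*k+1) then A ((2*k+1)/2) else B ((2*k+1)/2)) = B k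
      rw [if_neg (by simp [Nat.even_add_one, Nat.even_mul]), hd2]
    have hApos : ∀ k x, x ∈ A k → 0 < f x := by
      intro k x hx
      have h1 : (1:ℝ)/(k+1) < f x := hx
      have h2 : (0:ℝ) < 1/((k:ℝ)+1) := by positivity
      linarith
    have hBpos : ∀ k x, x ∈ B k → 0 < f x := by
      intro k x hx
      have h1 : (1:ℝ)/(k+1) ≤ f x := hx
      have h2 : (0:ℝ) < 1/((k:ℝ)+1) := by positivity
      linarith
    have hBA : ∀ k, B k ⊆ A (k+1) := by
      intro k x hx
      simp only [hA, hB, Set.mem_setOf_eq] at hx ⊢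
      push_cast
      have hlt : (1:ℝ)/((k:ℝ)+1+1) < 1/((k:ℝ)+1) :=
        one_div_lt_one_div_of_lt (by positivity) (by linarith)
      linarith
    have hAB : ∀ k, A k ⊆ B k := by
      intro k x hx
      simp only [hA, hB, Set.mem_setOf_eq] at hx ⊢
      linarith
    refine ⟨Ufun, ?_, ?_, ?_, ?_⟩
    · rw [hV]
      apply Set.Subset.antisymm
      · intro x hx
        have hx0 : 0 < f x := lt_of_le_of_ne (hb x).1 (Ne.symm hx)
        obtain ⟨k, hk⟩ := exists_nat_one_div_lt hx0
        simp only [Set.mem_iUnion]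
        refine ⟨2*k, ?_⟩
        have h21 : 2*k+1 = (2*k)+1 := rfl
        rw [hU2k1 k]
        show (1:ℝ)/((k:ℝ)+1) ≤ f x
        push_cast at hk
        linarith
      · intro x hx
        simp only [Set.mem_iUnion] at hx
        obtain ⟨n, hn⟩ := hx
        show f x ≠ 0
        rcases Nat.even_or_odd (n+1) with ⟨k, hk⟩ | ⟨k, hk⟩
        · have : n+1 = 2*k := by omega
          rw [this, hU2k] at hn
          exact ne_of_gt (hApos k x hn)
        · rw [hk, hU2k1] at hn
          exact ne_of_gt (hBpos k x hn)
    · intro n hn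
      rcases Nat.even_or_odd n with ⟨k, hk⟩ | ⟨k, hk⟩
      · have h1 : n = 2*k := by omega
        subst h1
        rw [hU2k, hU2k1]
        exact hAB k
      · subst hk
        have h2 : 2*k+1+1 = 2*(k+1) := by ring
        rw [h2, hU2k1, hU2k]
        exact hBA k
    · intro n hn
      obtain ⟨m, rfl⟩ : ∃ m, n = m+1 := ⟨n-1, by omega⟩
      have h1 : 2*(m+1)-1 = 2*m+1 := by omega
      rw [h1, hU2k1]
      have := isZeroSet_ge f hc hb (1/((m:ℝ)+1)) (by positivity) (by
        rw [div_le_one (by positivity)]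
        have : (1:ℝ) ≤ (m:ℝ)+1 := by
          have : (0:ℝ) ≤ (m:ℝ) := Nat.cast_nonneg m
          linarith
        exact this)
      simpa [hB] using this
    · intro n hn
      rw [hU2k]
      exact isCozeroSet_gt f hc hb (1/((n:ℝ)+1)) (by positivity)
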